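/- The derivative recursions characterize the explicit polynomials L_k: if P_0, P_1, ..., P_n ∈ ℝ[x_1, ..., x_d] satisfy P_0 = 1, P_k has zero constant term for every k ∈ {1, ..., n}, ∂P_k/∂x_1 = P_{k-1} for every k ∈ {1, ..., n}, and ∂P_k/∂x_s = ∑_{i=2}^{k} a_{i,s} P_{k-i} for every s ∈ {2, ..., d} and k ∈ {1, ..., n}, then P_k = L_k for every k ∈ {0, 1, ..., n}. -/

import Mathlib

/-- The explicit breadth-one basis polynomial `L_k` (Corollary 3.4):
`L_k = ∑ (1/γ₁!) (∏_{s=2}^d ∏_{j=2}^n a_{j,s}^{γ_{s,j}}/γ_{s,j}!) x₁^{γ₁} ∏_{s=2}^d x_s^{|γ_s|}`,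
the sum being over `γ₁ ∈ ℕ` and `γ_{s,j} ∈ ℕ` with `γ₁ + ∑_{s,j} j·γ_{s,j} = k`.
Variables `x₁,…,x_d` are the coordinates `0,…,d-1` of `Fin d`; the index `s : Fin (d-1)`
stands for the variable `x_{s+2}` and `j : Fin (n-1)` for the degree weight `j+2`. -/
noncomputable def Lpoly (d n : ℕ) (hd : 1 ≤ d) (a : ℕ → ℕ → ℝ) (k : ℕ) :
    MvPolynomial (Fin d) ℝ :=
  ∑ g1 ∈ Finset.range (k + 1),
    ∑ g ∈ (Finset.Icc (0 : Fin (d - 1) → Fin (n - 1) → ℕ) fun _ _ => k).filter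
        (fun g => g1 + ∑ s, ∑ j, (j.val + 2) * g s j = k),
      MvPolynomial.C ((1 / (g1.factorial : ℝ)) *
          ∏ s, ∏ j, a (j.val + 2) (s.val + 2) ^ g s j / ((g s j).factorial : ℝ)) *
        MvPolynomial.X (⟨0, hd⟩ : Fin d) ^ g1 *
        ∏ s : Fin (d - 1),
          MvPolynomial.X (⟨s.val + 1, by have := s.isLt; omega⟩ : Fin d) ^ (∑ j, g s j)


namespace LpolyAux

open MvPolynomial Finset

variable {d n : ℕ}

/-- weight of an exponent matrix -/
def wgt (g : Fin (d-1) → Fin (n-1) → ℕ) : ℕ := ∑ s, ∑ j, (j.val + 2) * g s j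

/-- coefficient -/
noncomputable def coefL (a : ℕ → ℕ → ℝ) (g1 : ℕ) (g : Fin (d-1) → Fin (n-1) → ℕ) : ℝ :=
  (1 / (g1.factorial : ℝ)) *
    ∏ s, ∏ j, a (j.val + 2) (s.val + 2) ^ g s j / ((g s j).factorial : ℝ)

def x0 (hd : 1 ≤ d) : Fin d := ⟨0, hd⟩

def xs (s : Fin (d-1)) : Fin d := ⟨s.val + 1, by have := s.isLt; omega⟩

lemma xs_ne_x0 (hd : 1 ≤ d) (s : Fin (d-1)) : xs s ≠ x0 hd := by
  simp [xs, x0, Fin.ext_iff]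

lemma xs_inj {s t : Fin (d-1)} (h : xs s = xs t) : s = t := by
  simpa [xs, Fin.ext_iff] using h

lemma x_cases (hd : 1 ≤ d) (v : Fin d) : v = x0 hd ∨ ∃ s, v = xs s := by
  rcases v with ⟨val, hv⟩
  cases val with
  | zero => left; rfl
  | succ t => right; exact ⟨⟨t, by omega⟩, rfl⟩

/-- exponent finsupp -/
noncomputable def expL (hd : 1 ≤ d) (g1 : ℕ) (g : Fin (d-1) → Fin (n-1) → ℕ) : Fin d →₀ ℕ :=
  Finsupp.single (x0 hd) g1 + ∑ s, Finsupp.single (xs s) (∑ j, g s j)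

lemma expL_apply_x0 (hd : 1 ≤ d) (g1 : ℕ) (g : Fin (d-1) → Fin (n-1) → ℕ) :
    expL hd g1 g (x0 hd) = g1 := by
  rw [expL, Finsupp.add_apply, Finsupp.finset_sum_apply]
  rw [Finsupp.single_eq_same]
  have : ∀ s : Fin (d-1), (Finsupp.single (xs s) (∑ j, g s j)) (x0 hd) = 0 := fun s =>
    Finsupp.single_eq_of_ne' (xs_ne_x0 hd s)
  simp [this]

lemma expL_apply_xs (hd : 1 ≤ d) (g1 : ℕ) (g : Fin (d-1) → Fin (n-1) → ℕ) (s0 : Fin (d-1)) :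
    expL hd g1 g (xs s0) = ∑ j, g s0 j := by
  rw [expL, Finsupp.add_apply, Finsupp.finset_sum_apply]
  rw [Finsupp.single_eq_of_ne' (Ne.symm (xs_ne_x0 hd s0))]
  rw [Finset.sum_eq_single s0]
  · simp
  · intro t _ hts
    exact Finsupp.single_eq_of_ne' (fun h => hts (xs_inj h))
  · simp

lemma expL_sub_x0 (hd : 1 ≤ d) {g1 : ℕ} (h : 1 ≤ g1) (g : Fin (d-1) → Fin (n-1) → ℕ) :
    expL hd g1 g - Finsupp.single (x0 hd) 1 = expL hd (g1-1) g := by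
  ext v
  rw [Finsupp.tsub_apply]
  rcases x_cases hd v with rfl | ⟨s, rfl⟩
  · rw [expL_apply_x0, expL_apply_x0, Finsupp.single_eq_same]
  · rw [expL_apply_xs, expL_apply_xs, Finsupp.single_eq_of_ne' (Ne.symm (xs_ne_x0 hd s))]
    omega

lemma term_le_wgt (g : Fin (d-1) → Fin (n-1) → ℕ) (s : Fin (d-1)) (j : Fin (n-1)) :
    (j.val + 2) * g s j ≤ wgt g := by
  calc (j.val + 2) * g s j ≤ ∑ j', (j'.val + 2) * g s j' :=
        Finset.single_le_sum (f := fun j' => (j'.val + 2) * g s j')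
          (fun _ _ => Nat.zero_le _) (mem_univ j)
    _ ≤ wgt g := Finset.single_le_sum (f := fun s => ∑ j', (j'.val + 2) * g s j')
        (fun _ _ => Nat.zero_le _) (mem_univ s)

lemma g_le_wgt (g : Fin (d-1) → Fin (n-1) → ℕ) (s : Fin (d-1)) (j : Fin (n-1)) :
    g s j ≤ wgt g :=
  le_trans (by nlinarith [Nat.zero_le (g s j)]) (term_le_wgt g s j)

/-- unit exponent matrix -/
def eunit (s0 : Fin (d-1)) (j0 : Fin (n-1)) : Fin (d-1) → Fin (n-1) → ℕ :=
  Pi.single s0 (Pi.single j0 1)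

lemma eunit_self (s0 : Fin (d-1)) (j0 : Fin (n-1)) : eunit s0 j0 s0 j0 = 1 := by
  simp [eunit]

lemma eunit_apply (s0 : Fin (d-1)) (j0 : Fin (n-1)) (s : Fin (d-1)) (j : Fin (n-1)) :
    eunit s0 j0 s j = if s = s0 ∧ j = j0 then 1 else 0 := by
  rcases eq_or_ne s s0 with rfl | hs
  · rcases eq_or_ne j j0 with rfl | hj
    · simp [eunit]
    · simp [eunit, Pi.single_apply, hj]
  · simp [eunit, Pi.single_apply, hs]

lemma eunit_le_one (s0 : Fin (d-1)) (j0 : Fin (n-1)) (s : Fin (d-1)) (j : Fin (n-1)) :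
    eunit s0 j0 s j ≤ 1 := by
  rw [eunit_apply]; split <;> omega

lemma wgt_add_e (g : Fin (d-1) → Fin (n-1) → ℕ) (s0 : Fin (d-1)) (j0 : Fin (n-1)) :
    wgt (g + eunit s0 j0) = wgt g + (j0.val + 2) := by
  rw [wgt, wgt]
  simp only [Pi.add_apply, Nat.mul_add, Finset.sum_add_distrib]
  congr 1
  simp only [eunit_apply, mul_ite, mul_one, mul_zero]
  rw [Finset.sum_eq_single s0]
  · rw [Finset.sum_eq_single j0] <;> simp
  · intro t _ hts
    apply Finset.sum_eq_zero
    intro j _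
    simp [hts]
  · simp

lemma rowsum_add_e (g : Fin (d-1) → Fin (n-1) → ℕ) (s0 : Fin (d-1)) (j0 : Fin (n-1))
    (s : Fin (d-1)) :
    ∑ j, (g + eunit s0 j0) s j = (∑ j, g s j) + (if s = s0 then 1 else 0) := by
  simp only [Pi.add_apply, Finset.sum_add_distrib]
  congr 1
  simp only [eunit_apply]
  rcases eq_or_ne s s0 with rfl | hs
  · simp
  · simp [hs]

lemma expL_add_e_sub (hd : 1 ≤ d) (g1 : ℕ) (g : Fin (d-1) → Fin (n-1) → ℕ)
    (s0 : Fin (d-1)) (j0 : Fin (n-1)) :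
    expL hd g1 (g + eunit s0 j0) - Finsupp.single (xs s0) 1 = expL hd g1 g := by
  ext v
  rw [Finsupp.tsub_apply]
  rcases x_cases hd v with rfl | ⟨s, rfl⟩
  · rw [expL_apply_x0, expL_apply_x0, Finsupp.single_eq_of_ne' (xs_ne_x0 hd s0)]
    omega
  · rw [expL_apply_xs, expL_apply_xs, rowsum_add_e]
    rcases eq_or_ne s s0 with rfl | hs
    · rw [Finsupp.single_eq_same, if_pos rfl]
      omega
    · rw [Finsupp.single_eq_of_ne' (fun h => hs (xs_inj h).symm), if_neg hs]
      omega

lemma factorial_key (x : ℝ) (m : ℕ) :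
    x ^ (m+1) / ((m+1).factorial : ℝ) * ((m : ℝ) + 1) = x * (x ^ m / (m.factorial : ℝ)) := by
  have h1 : ((m+1).factorial : ℝ) = ((m : ℝ) + 1) * (m.factorial : ℝ) := by
    rw [Nat.factorial_succ]; push_cast; ring
  have h2 : (m.factorial : ℝ) ≠ 0 := Nat.cast_ne_zero.mpr (Nat.factorial_ne_zero m)
  have h3 : ((m : ℝ) + 1) ≠ 0 := by positivity
  rw [h1, pow_succ]
  field_simp

lemma coefL_succ (a : ℕ → ℕ → ℝ) (g1 : ℕ) (g : Fin (d-1) → Fin (n-1) → ℕ) :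
    coefL a (g1 + 1) g * ((g1 : ℝ) + 1) = coefL a g1 g := by
  rw [coefL, coefL]
  have h1 : ((g1+1).factorial : ℝ) = ((g1 : ℝ) + 1) * (g1.factorial : ℝ) := by
    rw [Nat.factorial_succ]; push_cast; ring
  have h2 : (g1.factorial : ℝ) ≠ 0 := Nat.cast_ne_zero.mpr (Nat.factorial_ne_zero g1)
  have h3 : ((g1 : ℝ) + 1) ≠ 0 := by positivity
  rw [h1]
  field_simp

lemma prod_prod_erase {α β : Type*} [Fintype α] [Fintype β] [DecidableEq α] [DecidableEq β]
    (f : α → β → ℝ) (s0 : α) (j0 : β) :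
    ∏ s, ∏ j, f s j
      = f s0 j0 * ((∏ j ∈ univ.erase j0, f s0 j) * ∏ s ∈ univ.erase s0, ∏ j, f s j) := by
  rw [← Finset.mul_prod_erase univ (fun s => ∏ j, f s j) (mem_univ s0),
      ← Finset.mul_prod_erase univ (f s0) (mem_univ j0), mul_assoc]

lemma coefL_add_e (a : ℕ → ℕ → ℝ) (g1 : ℕ) (g : Fin (d-1) → Fin (n-1) → ℕ)
    (s0 : Fin (d-1)) (j0 : Fin (n-1)) :
    coefL a g1 (g + eunit s0 j0) * ((g s0 j0 : ℝ) + 1)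
      = a (j0.val + 2) (s0.val + 2) * coefL a g1 g := by
  rw [coefL, coefL]
  rw [prod_prod_erase (fun s j => a (j.val + 2) (s.val + 2) ^ (g + eunit s0 j0) s j /
      (((g + eunit s0 j0) s j).factorial : ℝ)) s0 j0,
    prod_prod_erase (fun s j => a (j.val + 2) (s.val + 2) ^ g s j /
      ((g s j).factorial : ℝ)) s0 j0]
  have hself : (g + eunit s0 j0) s0 j0 = g s0 j0 + 1 := by
    simp [eunit_apply]
  have hrow : ∀ j ∈ univ.erase j0,
      a (j.val + 2) (s0.val + 2) ^ (g + eunit s0 j0) s0 j / (((g + eunit s0 j0) s0 j).factorial : ℝ)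
        = a (j.val + 2) (s0.val + 2) ^ g s0 j / ((g s0 j).factorial : ℝ) := by
    intro j hj
    have : (g + eunit s0 j0) s0 j = g s0 j := by
      simp [eunit_apply, (Finset.mem_erase.mp hj).1]
    rw [this]
  have hrest : ∀ s ∈ univ.erase s0,
      (∏ j, a (j.val + 2) (s.val + 2) ^ (g + eunit s0 j0) s j / (((g + eunit s0 j0) s j).factorial : ℝ))
        = ∏ j, a (j.val + 2) (s.val + 2) ^ g s j / ((g s j).factorial : ℝ) := by
    intro s hs
    apply Finset.prod_congr rfl
    intro j _
    have : (g + eunit s0 j0) s j = g s j := by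
      simp [eunit_apply, (Finset.mem_erase.mp hs).1]
    rw [this]
  rw [Finset.prod_congr rfl hrow, Finset.prod_congr rfl hrest, hself]
  have key := factorial_key (a (j0.val + 2) (s0.val + 2)) (g s0 j0)
  set W := (∏ j ∈ univ.erase j0, a (j.val + 2) (s0.val + 2) ^ g s0 j / ((g s0 j).factorial : ℝ)) *
    ∏ s ∈ univ.erase s0, ∏ j, a (j.val + 2) (s.val + 2) ^ g s j / ((g s j).factorial : ℝ)
  linear_combination (1 / (g1.factorial : ℝ)) * W * key

lemma prod_X_pow_eq {σ : Type*} {ι : Type*} (S : Finset ι) (f : ι → σ) (e : ι → ℕ) :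
    ∏ i ∈ S, (X (f i) : MvPolynomial σ ℝ) ^ e i
      = monomial (∑ i ∈ S, Finsupp.single (f i) (e i)) 1 := by
  classical
  induction S using Finset.cons_induction with
  | empty => simp [monomial_zero']
  | cons i S hiS ih =>
      rw [Finset.prod_cons, Finset.sum_cons, ih, X_pow_eq_monomial, monomial_mul, one_mul]

lemma term_eq (hd : 1 ≤ d) (a : ℕ → ℕ → ℝ) (g1 : ℕ) (g : Fin (d-1) → Fin (n-1) → ℕ) :
    (MvPolynomial.C ((1 / (g1.factorial : ℝ)) *
          ∏ s, ∏ j, a (j.val + 2) (s.val + 2) ^ g s j / ((g s j).factorial : ℝ)) *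
        MvPolynomial.X (⟨0, hd⟩ : Fin d) ^ g1 *
        ∏ s : Fin (d - 1),
          MvPolynomial.X (⟨s.val + 1, by have := s.isLt; omega⟩ : Fin d) ^ (∑ j, g s j))
      = monomial (expL hd g1 g) (coefL a g1 g) := by
  have h1 : ∏ s : Fin (d - 1),
      (MvPolynomial.X (⟨s.val + 1, by have := s.isLt; omega⟩ : Fin d) : MvPolynomial (Fin d) ℝ)
        ^ (∑ j, g s j)
      = monomial (∑ s, Finsupp.single (xs s) (∑ j, g s j)) 1 :=
    prod_X_pow_eq univ xs (fun s => ∑ j, g s j)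
  rw [h1, X_pow_eq_monomial, C_mul_monomial, monomial_mul, mul_one, mul_one, expL, coefL]
  rfl

lemma Lpoly_eq_sum (hd : 1 ≤ d) (a : ℕ → ℕ → ℝ) {m B : ℕ} (hmB : m ≤ B) :
    Lpoly d n hd a m
      = ∑ g ∈ Finset.Icc (0 : Fin (d-1) → Fin (n-1) → ℕ) (fun _ _ => B),
          if wgt g ≤ m then (monomial (expL hd (m - wgt g) g)) (coefL a (m - wgt g) g)
          else 0 := by
  rw [Lpoly]
  have step1 : ∀ g1 ∈ Finset.range (m + 1),
      (∑ g ∈ (Finset.Icc (0 : Fin (d - 1) → Fin (n - 1) → ℕ) fun _ _ => m).filter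
          (fun g => g1 + ∑ s, ∑ j, (j.val + 2) * g s j = m),
        MvPolynomial.C ((1 / (g1.factorial : ℝ)) *
            ∏ s, ∏ j, a (j.val + 2) (s.val + 2) ^ g s j / ((g s j).factorial : ℝ)) *
          MvPolynomial.X (⟨0, hd⟩ : Fin d) ^ g1 *
          ∏ s : Fin (d - 1),
            MvPolynomial.X (⟨s.val + 1, by have := s.isLt; omega⟩ : Fin d) ^ (∑ j, g s j))
      = ∑ g ∈ Finset.Icc (0 : Fin (d-1) → Fin (n-1) → ℕ) (fun _ _ => B),
          if g1 + wgt g = m then (monomial (expL hd g1 g)) (coefL a g1 g) else 0 := by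
    intro g1 _
    rw [Finset.sum_congr rfl (fun g _ => term_eq hd a g1 g), Finset.sum_filter]
    apply Finset.sum_subset
    · apply Finset.Icc_subset_Icc le_rfl
      intro s j
      exact hmB
    · intro g _ hg
      rw [if_neg]
      intro hcond
      apply hg
      rw [Finset.mem_Icc]
      have hw : wgt g ≤ m := by rw [wgt]; omega
      exact ⟨fun s j => Nat.zero_le _,
        fun s j => le_trans (g_le_wgt g s j) hw⟩
  rw [Finset.sum_congr rfl step1, Finset.sum_comm]
  apply Finset.sum_congr rfl
  intro g _
  by_cases h : wgt g ≤ m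
  · rw [if_pos h, Finset.sum_eq_single (m - wgt g)]
    · rw [if_pos (by omega)]
    · intro g1 _ hne
      rw [if_neg (by omega)]
    · intro habs
      exact absurd (Finset.mem_range.mpr (by omega)) habs
  · rw [if_neg h]
    apply Finset.sum_eq_zero
    intro g1 _
    rw [if_neg (by omega)]

lemma wgt_eq_zero {g : Fin (d-1) → Fin (n-1) → ℕ} (h : ∀ s, (∑ j, g s j) = 0) : wgt g = 0 := by
  rw [wgt]
  apply Finset.sum_eq_zero
  intro s _
  apply Finset.sum_eq_zero
  intro j _
  have := (Finset.sum_eq_zero_iff.mp (h s)) j (mem_univ j)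
  simp [this]

lemma Lpoly_zero (hd : 1 ≤ d) (a : ℕ → ℕ → ℝ) : Lpoly d n hd a 0 = 1 := by
  rw [Lpoly_eq_sum hd a (le_refl 0)]
  have h0 : Finset.Icc (0 : Fin (d-1) → Fin (n-1) → ℕ) (fun _ _ => 0) = {0} := by
    ext g
    simp only [Finset.mem_Icc, Finset.mem_singleton]
    constructor
    · rintro ⟨-, h⟩
      funext s j
      exact le_antisymm (h s j) (Nat.zero_le _)
    · rintro rfl
      exact ⟨le_rfl, fun s j => le_rfl⟩
  rw [h0, Finset.sum_singleton, if_pos]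
  · have he : expL hd (0 - wgt (0 : Fin (d-1) → Fin (n-1) → ℕ)) (0 : Fin (d-1) → Fin (n-1) → ℕ) = 0 := by
      ext v
      rcases x_cases hd v with rfl | ⟨s, rfl⟩
      · rw [expL_apply_x0]; simp [wgt]
      · rw [expL_apply_xs]; simp
    have hc : coefL a (0 - wgt (0 : Fin (d-1) → Fin (n-1) → ℕ)) (0 : Fin (d-1) → Fin (n-1) → ℕ) = 1 := by
      have : wgt (0 : Fin (d-1) → Fin (n-1) → ℕ) = 0 := wgt_eq_zero (fun s => by simp)
      rw [this, coefL]
      simp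
    rw [he, hc, monomial_zero', C_1]
  · have : wgt (0 : Fin (d-1) → Fin (n-1) → ℕ) = 0 := wgt_eq_zero (fun s => by simp)
    omega

lemma constantCoeff_Lpoly (hd : 1 ≤ d) (a : ℕ → ℕ → ℝ) {k : ℕ} (hk : 1 ≤ k) :
    constantCoeff (Lpoly d n hd a k) = 0 := by
  rw [Lpoly_eq_sum hd a (le_refl k), map_sum]
  apply Finset.sum_eq_zero
  intro g _
  rw [apply_ite constantCoeff, map_zero]
  by_cases h : wgt g ≤ k
  · rw [if_pos h, constantCoeff_monomial, if_neg]
    intro hz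
    have hx0 : k - wgt g = 0 := by
      have := expL_apply_x0 hd (k - wgt g) g
      rw [hz] at this
      simpa using this.symm
    have hxs : ∀ s, (∑ j, g s j) = 0 := by
      intro s
      have := expL_apply_xs hd (k - wgt g) g s
      rw [hz] at this
      simpa using this.symm
    have := wgt_eq_zero hxs
    omega
  · rw [if_neg h]

lemma pderiv_x0_Lpoly (hd : 1 ≤ d) (a : ℕ → ℕ → ℝ) {k : ℕ} (hk : 1 ≤ k) :
    pderiv (x0 hd) (Lpoly d n hd a k) = Lpoly d n hd a (k - 1) := by
  rw [Lpoly_eq_sum hd a (le_refl k), Lpoly_eq_sum hd a (Nat.sub_le k 1), map_sum]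
  apply Finset.sum_congr rfl
  intro g _
  rw [apply_ite (pderiv (x0 hd)), map_zero, pderiv_monomial, expL_apply_x0]
  by_cases h1 : wgt g ≤ k - 1
  · rw [if_pos (by omega), if_pos h1]
    have hsplit : k - wgt g = (k - 1 - wgt g) + 1 := by omega
    rw [hsplit, expL_sub_x0 hd (by omega)]
    have : (k - 1 - wgt g + 1 - 1) = k - 1 - wgt g := by omega
    rw [this]
    congr 1
    push_cast
    exact coefL_succ a (k - 1 - wgt g) g
  · by_cases h2 : wgt g ≤ k
    · rw [if_pos h2, if_neg h1]
      have : k - wgt g = 0 := by omega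
      rw [this, Nat.cast_zero, mul_zero, map_zero]
    · rw [if_neg h2, if_neg h1]

lemma mem_Icc_bound {g : Fin (d-1) → Fin (n-1) → ℕ} {B : ℕ}
    (h : g ∈ Finset.Icc (0 : Fin (d-1) → Fin (n-1) → ℕ) (fun _ _ => B)) :
    ∀ s j, g s j ≤ B := by
  intro s j
  have := (Finset.mem_Icc.mp h).2
  exact (Pi.le_def.mp ((Pi.le_def.mp this) s)) j

lemma term_add_e (hd : 1 ≤ d) (a : ℕ → ℕ → ℝ) (s0 : Fin (d-1)) (j : Fin (n-1)) {k : ℕ}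
    {g' : Fin (d-1) → Fin (n-1) → ℕ} :
    (monomial (expL hd (k - wgt (g' + eunit s0 j)) (g' + eunit s0 j) - Finsupp.single (xs s0) 1))
        (coefL a (k - wgt (g' + eunit s0 j)) (g' + eunit s0 j) * (((g' + eunit s0 j) s0 j : ℕ) : ℝ))
      = a (j.val + 2) (s0.val + 2) •
        (monomial (expL hd (k - (j.val + 2) - wgt g') g'))
          (coefL a (k - (j.val + 2) - wgt g') g') := by
  have h1 : wgt (g' + eunit s0 j) = wgt g' + (j.val + 2) := wgt_add_e g' s0 j
  have h2 : k - wgt (g' + eunit s0 j) = k - (j.val + 2) - wgt g' := by omega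
  have h3 : (g' + eunit s0 j) s0 j = g' s0 j + 1 := by simp [eunit_apply]
  rw [h2, expL_add_e_sub, h3, smul_monomial, smul_eq_mul]
  congr 1
  push_cast
  exact coefL_add_e a _ g' s0 j

lemma pderiv_xs_Lpoly (hd : 1 ≤ d) (a : ℕ → ℕ → ℝ) (s0 : Fin (d-1)) {k : ℕ} (hkn : k ≤ n) :
    pderiv (xs s0) (Lpoly d n hd a k)
      = ∑ i ∈ Finset.Icc 2 k, a i (s0.val + 2) • Lpoly d n hd a (k - i) := by
  rw [Lpoly_eq_sum hd a (le_refl k), map_sum]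
  have stepA : ∀ g ∈ Finset.Icc (0 : Fin (d-1) → Fin (n-1) → ℕ) (fun _ _ => k),
      pderiv (xs s0)
          (if wgt g ≤ k then (monomial (expL hd (k - wgt g) g)) (coefL a (k - wgt g) g) else 0)
        = ∑ j : Fin (n-1), (if wgt g ≤ k then
            (monomial (expL hd (k - wgt g) g - Finsupp.single (xs s0) 1))
              (coefL a (k - wgt g) g * ((g s0 j : ℕ) : ℝ)) else 0) := by
    intro g _
    rw [apply_ite (pderiv (xs s0)), map_zero, pderiv_monomial, expL_apply_xs]
    by_cases h : wgt g ≤ k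
    · rw [if_pos h]
      rw [show (((∑ j, g s0 j : ℕ)) : ℝ) = ∑ j, ((g s0 j : ℕ) : ℝ) by push_cast; rfl]
      rw [Finset.mul_sum, map_sum]
      exact Finset.sum_congr rfl (fun j _ => by rw [if_pos h])
    · simp [if_neg h]
  rw [Finset.sum_congr rfl stepA, Finset.sum_comm]
  have stepB : ∑ i ∈ Finset.Icc 2 k, a i (s0.val + 2) • Lpoly d n hd a (k - i)
      = ∑ j : Fin (n-1), (if j.val + 2 ≤ k then
          a (j.val + 2) (s0.val + 2) • Lpoly d n hd a (k - (j.val + 2)) else 0) := by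
    rw [← Finset.sum_filter]
    refine (Finset.sum_bij' (i := fun (j : Fin (n-1)) _ => j.val + 2)
      (j := fun (i : ℕ) (hi : i ∈ Finset.Icc 2 k) =>
        (⟨i - 2, by
          have := Finset.mem_Icc.mp hi
          omega⟩ : Fin (n-1)))
      ?_ ?_ ?_ ?_ ?_).symm
    · intro j hj
      have h2 : j.val + 2 ≤ k := (Finset.mem_filter.mp hj).2
      show j.val + 2 ∈ Finset.Icc 2 k
      rw [Finset.mem_Icc]
      omega
    · intro i hi
      have h2 := Finset.mem_Icc.mp hi
      apply Finset.mem_filter.mpr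
      refine ⟨Finset.mem_univ _, ?_⟩
      show i - 2 + 2 ≤ k
      omega
    · intro j hj
      apply Fin.ext
      show j.val + 2 - 2 = j.val
      omega
    · intro i hi
      have h2 := Finset.mem_Icc.mp hi
      show i - 2 + 2 = i
      omega
    · intro j hj
      rfl
  rw [stepB]
  apply Finset.sum_congr rfl
  intro j _
  by_cases hjk : j.val + 2 ≤ k
  · rw [if_pos hjk, Lpoly_eq_sum hd a (show k - (j.val + 2) ≤ k by omega), Finset.smul_sum]
    have L1 : ∑ g ∈ Finset.Icc (0 : Fin (d-1) → Fin (n-1) → ℕ) (fun _ _ => k),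
        (if wgt g ≤ k then
          (monomial (expL hd (k - wgt g) g - Finsupp.single (xs s0) 1))
            (coefL a (k - wgt g) g * ((g s0 j : ℕ) : ℝ)) else 0)
        = ∑ g ∈ (Finset.Icc (0 : Fin (d-1) → Fin (n-1) → ℕ) (fun _ _ => k)).filter
            (fun g => wgt g ≤ k ∧ 1 ≤ g s0 j),
            (monomial (expL hd (k - wgt g) g - Finsupp.single (xs s0) 1))
              (coefL a (k - wgt g) g * ((g s0 j : ℕ) : ℝ)) := by
      rw [Finset.sum_filter]
      apply Finset.sum_congr rfl
      intro g _
      by_cases h1 : wgt g ≤ k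
      · by_cases h2 : 1 ≤ g s0 j
        · rw [if_pos h1, if_pos ⟨h1, h2⟩]
        · rw [if_pos h1, if_neg (by tauto)]
          have : g s0 j = 0 := by omega
          rw [this]
          simp
      · rw [if_neg h1, if_neg (by tauto)]
    have L2 : ∑ g' ∈ Finset.Icc (0 : Fin (d-1) → Fin (n-1) → ℕ) (fun _ _ => k),
        a (j.val + 2) (s0.val + 2) •
          (if wgt g' ≤ k - (j.val + 2) then
            (monomial (expL hd (k - (j.val + 2) - wgt g') g'))
              (coefL a (k - (j.val + 2) - wgt g') g') else 0)
        = ∑ g' ∈ (Finset.Icc (0 : Fin (d-1) → Fin (n-1) → ℕ) (fun _ _ => k)).filter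
            (fun g' => wgt g' ≤ k - (j.val + 2)),
            a (j.val + 2) (s0.val + 2) •
              (monomial (expL hd (k - (j.val + 2) - wgt g') g'))
                (coefL a (k - (j.val + 2) - wgt g') g') := by
      rw [Finset.sum_filter]
      apply Finset.sum_congr rfl
      intro g' _
      by_cases h1 : wgt g' ≤ k - (j.val + 2)
      · rw [if_pos h1, if_pos h1]
      · rw [if_neg h1, if_neg h1, smul_zero]
    rw [L1, L2]
    apply Finset.sum_bij' (i := fun g (_ : g ∈ _) => g - eunit s0 j)
      (j := fun g' (_ : g' ∈ _) => g' + eunit s0 j)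
    · -- hi
      intro g hg
      obtain ⟨hIcc, hwk, hg1⟩ : g ∈ _ ∧ wgt g ≤ k ∧ 1 ≤ g s0 j := by
        have := Finset.mem_filter.mp hg
        exact ⟨this.1, this.2.1, this.2.2⟩
      have hb := mem_Icc_bound hIcc
      have hge : eunit s0 j ≤ g := by
        intro s
        intro j'
        rw [eunit_apply]
        split
        · next h => obtain ⟨rfl, rfl⟩ := h; exact hg1
        · exact Nat.zero_le _
      have hid : (g - eunit s0 j) + eunit s0 j = g := by
        funext s j'
        show g s j' - eunit s0 j s j' + eunit s0 j s j' = g s j'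
        have h1 := eunit_le_one s0 j s j'
        have h2 : eunit s0 j s j' ≤ g s j' := hge s j'
        omega
      have hw' : wgt (g - eunit s0 j) ≤ k - (j.val + 2) := by
        have h3 := wgt_add_e (g - eunit s0 j) s0 j
        rw [hid] at h3
        omega
      apply Finset.mem_filter.mpr
      refine ⟨Finset.mem_Icc.mpr ⟨fun s j' => Nat.zero_le _, fun s j' => ?_⟩, hw'⟩
      calc g s j' - eunit s0 j s j' ≤ g s j' := Nat.sub_le _ _
        _ ≤ k := hb s j'
    · -- hj
      intro g' hg'
      obtain ⟨hIcc, hw⟩ := Finset.mem_filter.mp hg'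
      have hb := mem_Icc_bound hIcc
      apply Finset.mem_filter.mpr
      refine ⟨Finset.mem_Icc.mpr ⟨fun s j' => Nat.zero_le _, fun s j' => ?_⟩, ?_, ?_⟩
      · show g' s j' + eunit s0 j s j' ≤ k
        have h1 := eunit_le_one s0 j s j'
        have h2 := g_le_wgt g' s j'
        omega
      · rw [wgt_add_e]
        omega
      · show 1 ≤ g' s0 j + eunit s0 j s0 j
        rw [eunit_self]
        omega
    · -- left inverse
      intro g hg
      have hg1 : 1 ≤ g s0 j := (Finset.mem_filter.mp hg).2.2
      funext s j'
      show g s j' - eunit s0 j s j' + eunit s0 j s j' = g s j'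
      have h1 := eunit_le_one s0 j s j'
      have h2 : eunit s0 j s j' ≤ g s j' := by
        rw [eunit_apply]
        split
        · next h => obtain ⟨rfl, rfl⟩ := h; omega
        · omega
      omega
    · -- right inverse
      intro g' hg'
      funext s j'
      show g' s j' + eunit s0 j s j' - eunit s0 j s j' = g' s j'
      omega
    · -- values
      intro g hg
      have hg1 : 1 ≤ g s0 j := (Finset.mem_filter.mp hg).2.2
      have hid : (g - eunit s0 j) + eunit s0 j = g := by
        funext s j'
        show g s j' - eunit s0 j s j' + eunit s0 j s j' = g s j'
        have h1 := eunit_le_one s0 j s j'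
        have h2 : eunit s0 j s j' ≤ g s j' := by
          rw [eunit_apply]
          split
          · next h => obtain ⟨rfl, rfl⟩ := h; omega
          · omega
        omega
      conv_lhs => rw [← hid]
      exact term_add_e hd a s0 j
  · rw [if_neg hjk]
    apply Finset.sum_eq_zero
    intro g _
    by_cases h1 : wgt g ≤ k
    · rw [if_pos h1]
      have hgz : g s0 j = 0 := by
        by_contra h'
        have h2 := term_le_wgt g s0 j
        have h3 : j.val + 2 ≤ (j.val + 2) * g s0 j := Nat.le_mul_of_pos_right _ (by omega)
        omega
      rw [hgz]
      simp
    · rw [if_neg h1]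

lemma coeff_pderiv {σ : Type*} [DecidableEq σ] (i : σ) (p : MvPolynomial σ ℝ) (m : σ →₀ ℕ) :
    coeff m (pderiv i p) = ((m i : ℝ) + 1) * coeff (m + Finsupp.single i 1) p := by
  induction p using MvPolynomial.induction_on' with
  | add p q hp hq => rw [map_add, coeff_add, coeff_add, hp, hq]; ring
  | monomial u c =>
    rw [pderiv_monomial, coeff_monomial, coeff_monomial]
    by_cases h : u = m + Finsupp.single i 1
    · subst h
      rw [if_pos (add_tsub_cancel_right _ _), if_pos rfl, Finsupp.add_apply,
        Finsupp.single_eq_same]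
      push_cast
      ring
    · rw [if_neg h, mul_zero]
      by_cases h2 : u - Finsupp.single i 1 = m
      · rw [if_pos h2]
        have hui : u i = 0 := by
          by_contra hne
          apply h
          ext v
          rw [Finsupp.add_apply, ← h2, Finsupp.tsub_apply, Finsupp.single_apply]
          rcases eq_or_ne i v with rfl | hv
          · rw [if_pos rfl]
            omega
          · rw [if_neg hv]
            omega
        rw [hui]
        simp
      · rw [if_neg h2]

lemma eq_of_pderiv_eq {σ : Type*} [DecidableEq σ] {p q : MvPolynomial σ ℝ}
    (h0 : constantCoeff p = constantCoeff q) (hD : ∀ i, pderiv i p = pderiv i q) : p = q := by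
  ext m
  rcases eq_or_ne m 0 with rfl | hm
  · exact h0
  · obtain ⟨i, hi⟩ := Finsupp.ne_iff.mp hm
    have hi' : m i ≠ 0 := by simpa using hi
    have hle : Finsupp.single i 1 ≤ m := Finsupp.single_le_iff.mpr (by omega)
    have hrw : (m - Finsupp.single i 1) + Finsupp.single i 1 = m := tsub_add_cancel_of_le hle
    have h1 := coeff_pderiv i p (m - Finsupp.single i 1)
    have h2 := coeff_pderiv i q (m - Finsupp.single i 1)
    rw [hD i, h2] at h1
    set m' : σ →₀ ℕ := m - Finsupp.single i 1 with hm'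
    have hne : ((m' i : ℝ) + 1) ≠ 0 := by positivity
    have h3 := mul_left_cancel₀ hne h1.symm
    rwa [hrw] at h3

end LpolyAux


/-- The derivative recursions characterize the explicit polynomials `L_k`:
if `P_0 = 1`, each `P_k` (`1 ≤ k ≤ n`) has zero constant term, `∂P_k/∂x₁ = P_{k-1}` for
`1 ≤ k ≤ n`, and `∂P_k/∂x_s = ∑_{i=2}^k a_{i,s} P_{k-i}` for `2 ≤ s ≤ d`, `1 ≤ k ≤ n`,
then `P_k = L_k` for every `k ≤ n`. -/
theorem Lpoly_unique_of_recursions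
    (d n : ℕ) (hd : 2 ≤ d) (hn : 1 ≤ n) (a : ℕ → ℕ → ℝ)
    (P : ℕ → MvPolynomial (Fin d) ℝ)
    (hP0 : P 0 = 1)
    (hPconst : ∀ k : ℕ, 1 ≤ k → k ≤ n → MvPolynomial.constantCoeff (P k) = 0)
    (hPx1 : ∀ k : ℕ, 1 ≤ k → k ≤ n →
      MvPolynomial.pderiv (⟨0, by omega⟩ : Fin d) (P k) = P (k - 1))
    (hPxs : ∀ s : Fin d, 1 ≤ s.val → ∀ k : ℕ, 1 ≤ k → k ≤ n →
      MvPolynomial.pderiv s (P k)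
        = ∑ i ∈ Finset.Icc 2 k, a i (s.val + 1) • P (k - i)) :
    ∀ k : ℕ, k ≤ n → P k = Lpoly d n (by omega) a k := by
  have hd1 : 1 ≤ d := by omega
  intro k
  induction k using Nat.strong_induction_on with
  | _ k IH =>
    intro hk
    match k with
    | 0 =>
      rw [hP0]
      exact (LpolyAux.Lpoly_zero hd1 a).symm
    | (k' + 1) =>
      have hk1 : 1 ≤ k' + 1 := by omega
      show P (k' + 1) = Lpoly d n hd1 a (k' + 1)
      apply LpolyAux.eq_of_pderiv_eq
      · rw [hPconst _ hk1 hk, LpolyAux.constantCoeff_Lpoly hd1 a hk1]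
      · intro i
        rcases LpolyAux.x_cases hd1 i with rfl | ⟨s0, rfl⟩
        · rw [LpolyAux.pderiv_x0_Lpoly hd1 a hk1]
          have h1 := hPx1 (k' + 1) hk1 hk
          rw [show (LpolyAux.x0 hd1) = (⟨0, by omega⟩ : Fin d) from rfl, h1]
          exact IH k' (by omega) (by omega)
        · rw [LpolyAux.pderiv_xs_Lpoly hd1 a s0 hk]
          have hs1 : 1 ≤ (LpolyAux.xs s0 : Fin d).val := by
            simp [LpolyAux.xs]
          rw [hPxs _ hs1 (k' + 1) hk1 hk]
          apply Finset.sum_congr rfl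
          intro i hi
          obtain ⟨h2i, hik⟩ := Finset.mem_Icc.mp hi
          have hval : (LpolyAux.xs s0 : Fin d).val + 1 = s0.val + 2 := by
            simp [LpolyAux.xs]
          rw [hval, IH (k' + 1 - i) (by omega) (by omega)]
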